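/- Let d ≥ 10 be an integer, let a > 0, and let g : [0,∞) → ℝ be a smooth function satisfying the Yang–Mills shrinker equation g''(y) + ((d-3)/y - y/2) g'(y) - (d-2)/y² · g(y)(g(y)-1)(g(y)-2) = 0 for all y > 0, with g(0) = 0, g'(0) = 0, and g''(0) = a. Then the function h(y) = y³ g'(y) satisfies h'(y) > 0 for all y > 0. -/

import Mathlib

open Real Set Filter Topology

set_option maxHeartbeats 1000000 in
theorem h_deriv_positive_yang_mills (d : ℕ) (hd : 10 ≤ d) (a : ℝ) (ha : 0 < a)
    (g : ℝ → ℝ)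
    (hg : ContDiffOn ℝ (⊤ : ℕ∞) g (Ici 0))
    (hode : ∀ y : ℝ, 0 < y →
      deriv (deriv g) y + (((d : ℝ) - 3) / y - y / 2) * deriv g y
        - ((d : ℝ) - 2) / y ^ 2 * (g y * (g y - 1) * (g y - 2)) = 0)
    (hg0 : g 0 = 0)
    (hg'0 : derivWithin g (Ici 0) 0 = 0)
    (hg''0 : derivWithin (derivWithin g (Ici 0)) (Ici 0) 0 = a) :
    ∀ y : ℝ, 0 < y → 0 < deriv (fun z => z ^ 3 * deriv g z) y := by
  have hd' : (10:ℝ) ≤ (d:ℝ) := by exact_mod_cast hd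
  -- basic regularity on (0, ∞)
  have hIoi : ContDiffOn ℝ (⊤ : ℕ∞) g (Ioi 0) := hg.mono Ioi_subset_Ici_self
  have hgd : ContDiffOn ℝ (⊤ : ℕ∞) (deriv g) (Ioi 0) :=
    hIoi.deriv_of_isOpen isOpen_Ioi (by exact_mod_cast le_top)
  have hderivg : ∀ y : ℝ, 0 < y → HasDerivAt g (deriv g y) y := fun y hy =>
    (((hIoi.differentiableOn (by simp)).differentiableAt
      (isOpen_Ioi.mem_nhds hy))).hasDerivAt
  have hderivg' : ∀ y : ℝ, 0 < y → HasDerivAt (deriv g) (deriv (deriv g) y) y := fun y hy =>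
    (((hgd.differentiableOn (by simp)).differentiableAt
      (isOpen_Ioi.mem_nhds hy))).hasDerivAt
  have hcontg : ContinuousOn g (Ioi 0) := hIoi.continuousOn
  have hcontg1 : ContinuousOn (deriv g) (Ioi 0) := hgd.continuousOn
  -- the function F = h' (expressed without second derivatives)
  set F : ℝ → ℝ := fun y => (6 - (d:ℝ) + y^2/2) * y^2 * deriv g y
      + ((d:ℝ) - 2) * y * (g y * (g y - 1) * (g y - 2)) with hFdef
  have hG2 : ∀ y : ℝ, 0 < y → deriv (deriv g) y =
      -((((d:ℝ)-3))/y - y/2) * deriv g y + ((d:ℝ)-2)/y^2 * (g y * (g y - 1) * (g y - 2)) := by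
    intro y hy; have := hode y hy; linarith
  have hcontF : ContinuousOn F (Ioi 0) := by
    apply ContinuousOn.add
    · exact (((continuous_const.add ((continuous_pow 2).div_const 2)).continuousOn.mul
        (continuous_pow 2).continuousOn).mul hcontg1)
    · exact (continuous_const.mul continuous_id).continuousOn.mul
        ((hcontg.mul (hcontg.sub continuousOn_const)).mul (hcontg.sub continuousOn_const))
  -- h' = F
  have hhF : ∀ y : ℝ, 0 < y → HasDerivAt (fun z => z ^ 3 * deriv g z) (F y) y := by
    intro y hy
    have h1 : HasDerivAt (fun z : ℝ => z ^ 3 * deriv g z)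
        ((3:ℕ) * y ^ 2 * deriv g y + y ^ 3 * deriv (deriv g) y) y :=
      (hasDerivAt_pow 3 y).mul (hderivg' y hy)
    convert h1 using 1
    rw [hG2 y hy, hFdef]
    push_cast
    field_simp
    ring
  have hderivh : ∀ y : ℝ, 0 < y → deriv (fun z => z ^ 3 * deriv g z) y = F y :=
    fun y hy => (hhF y hy).deriv
  -- the key differential identity : F' = α F + β h
  have hFderiv : ∀ y : ℝ, 0 < y → HasDerivAt F
      (((7 - (d:ℝ)) / y + y/2) * F y
        + (((d:ℝ) - 10 + 3*((d:ℝ)-2)*(g y - 1)^2)/y^2) * (y^3 * deriv g y)) y := by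
    intro y hy
    have hA : HasDerivAt (fun z : ℝ => 6 - (d:ℝ) + z^2/2) y y := by
      have := ((hasDerivAt_pow 2 y).div_const 2).const_add (6 - (d:ℝ))
      refine this.congr_deriv ?_
      push_cast; ring
    have hP2 : HasDerivAt (fun z : ℝ => z^2) ((2:ℝ)*y) y := by
      simpa using hasDerivAt_pow 2 y
    have hgy := hderivg y hy
    have hGfun : HasDerivAt (fun z => g z * (g z - 1) * (g z - 2))
        ((deriv g y * (g y - 1) + g y * deriv g y) * (g y - 2)
          + g y * (g y - 1) * deriv g y) y :=
      ((hgy.mul (hgy.sub_const 1)).mul (hgy.sub_const 2))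
    have hF1 : HasDerivAt (fun z : ℝ => (6 - (d:ℝ) + z^2/2) * z^2 * deriv g z)
        (((y * y^2 + (6 - (d:ℝ) + y^2/2) * (2*y)) * deriv g y
          + ((6 - (d:ℝ) + y^2/2) * y^2) * deriv (deriv g) y)) y :=
      ((hA.mul hP2).mul (hderivg' y hy))
    have hF2 : HasDerivAt (fun z : ℝ => ((d:ℝ) - 2) * z * (g z * (g z - 1) * (g z - 2)))
        (((d:ℝ) - 2) * (g y * (g y - 1) * (g y - 2))
          + ((d:ℝ) - 2) * y * ((deriv g y * (g y - 1) + g y * deriv g y) * (g y - 2)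
            + g y * (g y - 1) * deriv g y)) y := by
      have hid : HasDerivAt (fun z : ℝ => ((d:ℝ) - 2) * z) ((d:ℝ) - 2) y := by
        simpa using (hasDerivAt_id y).const_mul ((d:ℝ) - 2)
      exact hid.mul hGfun
    have htot := hF1.add hF2
    rw [hFdef]
    refine htot.congr_deriv ?_
    rw [hG2 y hy]
    field_simp
    ring
  -- limits near 0
  have hG1w : ContDiffOn ℝ (⊤ : ℕ∞) (derivWithin g (Ici 0)) (Ici 0) :=
    hg.derivWithin (uniqueDiffOn_Ici 0) (by exact_mod_cast le_top)
  have T1 : Tendsto (fun y => deriv g y / y) (𝓝[>] (0:ℝ)) (𝓝 a) := by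
    have hdw : DifferentiableWithinAt ℝ (derivWithin g (Ici 0)) (Ici 0) 0 :=
      (hG1w.differentiableOn (by simp)) 0 self_mem_Ici
    have hhd : HasDerivWithinAt (derivWithin g (Ici 0)) a (Ici 0) 0 := by
      have := hdw.hasDerivWithinAt; rwa [hg''0] at this
    rw [hasDerivWithinAt_iff_tendsto_slope] at hhd
    rw [show Ici (0:ℝ) \ {0} = Ioi 0 from Ici_sdiff_left] at hhd
    refine hhd.congr' ?_
    filter_upwards [self_mem_nhdsWithin] with y hy
    have hy' : (0:ℝ) < y := hy
    rw [slope_def_field, hg'0, derivWithin_of_mem_nhds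
      (mem_of_superset (isOpen_Ioi.mem_nhds hy') Ioi_subset_Ici_self)]
    ring
  have Tg : Tendsto g (𝓝[>] (0:ℝ)) (𝓝 0) := by
    have := (hg.continuousOn 0 self_mem_Ici).tendsto
    rw [hg0] at this
    exact this.mono_left (nhdsWithin_mono 0 Ioi_subset_Ici_self)
  have T3 : Tendsto (fun y => deriv g y) (𝓝[>] (0:ℝ)) (𝓝 0) := by
    have h1 : Tendsto (fun y : ℝ => (deriv g y / y) * y) (𝓝[>] (0:ℝ)) (𝓝 (a * 0)) :=
      T1.mul (tendsto_id.mono_left nhdsWithin_le_nhds)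
    rw [mul_zero] at h1
    refine h1.congr' ?_
    filter_upwards [self_mem_nhdsWithin] with y hy
    have hy' : (0:ℝ) < y := hy
    field_simp
  have T2 : Tendsto (fun y => g y / y^2) (𝓝[>] (0:ℝ)) (𝓝 (a/2)) := by
    apply deriv.lhopital_zero_nhdsGT (g := fun y : ℝ => y^2)
    · filter_upwards [self_mem_nhdsWithin] with y hy
      exact (hderivg y hy).differentiableAt
    · filter_upwards [self_mem_nhdsWithin] with y hy
      have hy' : (0:ℝ) < y := hy
      rw [deriv_pow_field]
      positivity
    · exact Tg
    · have : Tendsto (fun y : ℝ => y^2) (𝓝 0) (𝓝 0) := by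
        simpa using (continuous_pow 2).tendsto (0:ℝ)
      exact this.mono_left nhdsWithin_le_nhds
    · have h1 : Tendsto (fun y : ℝ => (deriv g y / y) / 2) (𝓝[>] (0:ℝ)) (𝓝 (a/2)) :=
        T1.div_const 2
      refine h1.congr' ?_
      filter_upwards [self_mem_nhdsWithin] with y hy
      have hy' : (0:ℝ) < y := hy
      rw [deriv_pow_field]
      push_cast
      rw [pow_one, div_div]
      ring
  have Th0 : Tendsto (fun y : ℝ => y^3 * deriv g y) (𝓝[>] (0:ℝ)) (𝓝 0) := by
    have h1 : Tendsto (fun y : ℝ => (deriv g y / y) * y^4) (𝓝[>] (0:ℝ)) (𝓝 (a * 0)) := by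
      apply T1.mul
      have : Tendsto (fun y : ℝ => y^4) (𝓝 0) (𝓝 0) := by
        simpa using (continuous_pow 4).tendsto (0:ℝ)
      simpa using this.mono_left nhdsWithin_le_nhds
    rw [mul_zero] at h1
    refine h1.congr' ?_
    filter_upwards [self_mem_nhdsWithin] with y hy
    have hy' : (0:ℝ) < y := hy
    field_simp
  -- F is eventually positive near 0
  have TF : Tendsto (fun y => F y / y^3) (𝓝[>] (0:ℝ)) (𝓝 (4*a)) := by
    have h1 : Tendsto (fun y : ℝ => (6 - (d:ℝ) + y^2/2) * (deriv g y / y)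
        + ((d:ℝ) - 2) * (g y / y^2) * ((g y - 1) * (g y - 2)))
        (𝓝[>] (0:ℝ)) (𝓝 ((6 - (d:ℝ) + 0^2/2) * a + ((d:ℝ) - 2) * (a/2) * ((0 - 1) * (0 - 2)))) := by
      apply Tendsto.add
      · apply Tendsto.mul _ T1
        have : Tendsto (fun y : ℝ => 6 - (d:ℝ) + y^2/2) (𝓝 0) (𝓝 (6 - (d:ℝ) + 0^2/2)) := by
          exact (continuous_const.add ((continuous_pow 2).div_const 2)).tendsto 0
        exact this.mono_left nhdsWithin_le_nhds
      · apply Tendsto.mul ((tendsto_const_nhds.mul T2))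
        have := ((Tg.sub_const 1).mul (Tg.sub_const 2))
        simpa using this
    have h2 : (6 - (d:ℝ) + 0^2/2) * a + ((d:ℝ) - 2) * (a/2) * ((0 - 1) * (0 - 2)) = 4*a := by
      ring
    rw [h2] at h1
    refine h1.congr' ?_
    filter_upwards [self_mem_nhdsWithin] with y hy
    have hy' : (0:ℝ) < y := hy
    rw [hFdef]
    field_simp
  have hFposnear : ∀ᶠ y in 𝓝[>] (0:ℝ), 0 < F y := by
    have h1 : ∀ᶠ y in 𝓝[>] (0:ℝ), 0 < F y / y^3 :=
      TF.eventually (eventually_gt_nhds (by linarith))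
    filter_upwards [h1, self_mem_nhdsWithin] with y h2 hy
    have hy' : (0:ℝ) < y := hy
    have := mul_pos h2 (pow_pos hy' 3)
    rwa [div_mul_cancel₀] at this
    positivity
  -- main argument
  intro Y hY
  rw [hderivh Y hY]
  by_contra hFY'
  push_neg at hFY'
  -- find ε
  obtain ⟨ε0, hε0, hball⟩ := mem_nhdsGT_iff_exists_Ioo_subset.mp hFposnear
  have hε0' : (0:ℝ) < ε0 := hε0
  set ε : ℝ := min (ε0/2) (Y/2) with hεdef
  have hεpos : 0 < ε := lt_min (by linarith) (by linarith)
  have hεY : ε < Y := lt_of_le_of_lt (min_le_right _ _) (by linarith)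
  have hFsmall : ∀ y : ℝ, 0 < y → y ≤ ε → 0 < F y := by
    intro y hy hyε
    exact hball ⟨hy, lt_of_le_of_lt hyε (lt_of_le_of_lt (min_le_left _ _) (by linarith))⟩
  -- the first point where F ≤ 0
  set S : Set ℝ := Icc ε Y ∩ F ⁻¹' (Iic 0) with hSdef
  have hSne : S.Nonempty := ⟨Y, ⟨hεY.le, le_refl Y⟩, hFY'⟩
  have hSbdd : BddBelow S := ⟨ε, fun y hy => hy.1.1⟩
  have hSclosed : IsClosed S :=
    (hcontF.mono (fun x hx => lt_of_lt_of_le hεpos hx.1)).preimage_isClosed_of_isClosed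
      isClosed_Icc isClosed_Iic
  set y₀ : ℝ := sInf S with hy₀def
  have hy₀S : y₀ ∈ S := hSclosed.csInf_mem hSne hSbdd
  have hy₀ε : ε ≤ y₀ := hy₀S.1.1
  have hy₀Y : y₀ ≤ Y := hy₀S.1.2
  have hFy₀ : F y₀ ≤ 0 := hy₀S.2
  have hy₀pos : 0 < y₀ := lt_of_lt_of_le hεpos hy₀ε
  have hy₀ε' : ε < y₀ := by
    rcases eq_or_lt_of_le hy₀ε with h | h
    · exfalso; have := hFsmall ε hεpos (le_refl ε); rw [h] at this; linarith
    · exact h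
  have hFpos : ∀ y : ℝ, 0 < y → y < y₀ → 0 < F y := by
    intro y hy hyy₀
    by_cases hyε : y ≤ ε
    · exact hFsmall y hy hyε
    · push_neg at hyε
      by_contra hFy
      push_neg at hFy
      have : y ∈ S := ⟨⟨hyε.le, le_trans hyy₀.le hy₀Y⟩, hFy⟩
      have := csInf_le hSbdd this
      rw [← hy₀def] at this
      linarith
  -- h is positive on (0, y₀)
  have hconth : ContinuousOn (fun z : ℝ => z^3 * deriv g z) (Ioi 0) :=
    (continuous_pow 3).continuousOn.mul hcontg1
  have hmono : StrictMonoOn (fun z : ℝ => z^3 * deriv g z) (Ioo 0 y₀) := by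
    apply strictMonoOn_of_deriv_pos (convex_Ioo 0 y₀)
      (hconth.mono (fun x hx => hx.1))
    intro x hx
    rw [interior_Ioo] at hx
    rw [hderivh x hx.1]
    exact hFpos x hx.1 hx.2
  have hhnonneg : ∀ y ∈ Ioo (0:ℝ) y₀, 0 ≤ y^3 * deriv g y := by
    intro y hy
    refine le_of_tendsto Th0 ?_
    filter_upwards [Ioo_mem_nhdsGT_of_mem (by constructor <;> [exact le_refl 0; exact hy.1])]
      with z hz
    exact (hmono ⟨hz.1, lt_trans hz.2 hy.2⟩ hy hz.2).le
  have hhpos : ∀ y ∈ Ioo (0:ℝ) y₀, 0 < y^3 * deriv g y := by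
    intro y hy
    have h1 : y/2 ∈ Ioo (0:ℝ) y₀ := ⟨by linarith [hy.1], by linarith [hy.2]⟩
    have := hmono h1 hy (by linarith [hy.1])
    have h2 := hhnonneg (y/2) h1
    linarith
  -- the integrating factor argument
  set W : ℝ → ℝ := fun y => F y * Real.exp (-((7 - (d:ℝ)) * Real.log y + y^2/4)) with hWdef
  have hWderiv : ∀ y : ℝ, 0 < y → HasDerivAt W
      ((((d:ℝ) - 10 + 3*((d:ℝ)-2)*(g y - 1)^2)/y^2) * (y^3 * deriv g y)
        * Real.exp (-((7 - (d:ℝ)) * Real.log y + y^2/4))) y := by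
    intro y hy
    have hΦ : HasDerivAt (fun z : ℝ => -((7 - (d:ℝ)) * Real.log z + z^2/4))
        (-((7 - (d:ℝ)) / y + y/2)) y := by
      have h1 : HasDerivAt (fun z : ℝ => (7 - (d:ℝ)) * Real.log z) ((7 - (d:ℝ)) * (1/y)) y :=
        (Real.hasDerivAt_log (ne_of_gt hy)).const_mul _ |>.congr_deriv (by ring)
      have h2 : HasDerivAt (fun z : ℝ => z^2/4) (y/2) y := by
        have := (hasDerivAt_pow 2 y).div_const 4
        refine this.congr_deriv ?_; push_cast; ring
      have := (h1.add h2).neg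
      refine this.congr_deriv ?_
      field_simp
    have hE : HasDerivAt (fun z : ℝ => Real.exp (-((7 - (d:ℝ)) * Real.log z + z^2/4)))
        (Real.exp (-((7 - (d:ℝ)) * Real.log y + y^2/4)) * (-((7 - (d:ℝ)) / y + y/2))) y :=
      hΦ.exp
    have htot := (hFderiv y hy).mul hE
    rw [hWdef]
    refine htot.congr_deriv ?_
    ring
  have hcontW : ContinuousOn W (Ioi 0) := by
    apply hcontF.mul
    apply Real.continuous_exp.comp_continuousOn
    apply ContinuousOn.neg
    apply ContinuousOn.add
    · exact continuousOn_const.mul (Real.continuousOn_log.mono (fun x hx => ne_of_gt hx))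
    · exact ((continuous_pow 2).div_const 4).continuousOn
  have hWmono : MonotoneOn W (Icc (y₀/2) y₀) := by
    apply monotoneOn_of_deriv_nonneg (convex_Icc _ _)
      (hcontW.mono (fun x hx => lt_of_lt_of_le (by linarith) hx.1))
    · intro x hx
      rw [interior_Icc] at hx
      have hx0 : (0:ℝ) < x := lt_trans (by linarith) hx.1
      exact (hWderiv x hx0).differentiableAt.differentiableWithinAt
    · intro x hx
      rw [interior_Icc] at hx
      have hx0 : (0:ℝ) < x := lt_trans (by linarith) hx.1
      rw [(hWderiv x hx0).deriv]
      have hβ : 0 ≤ ((d:ℝ) - 10 + 3*((d:ℝ)-2)*(g x - 1)^2)/x^2 := by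
        apply div_nonneg _ (by positivity)
        have : 0 ≤ 3*((d:ℝ)-2)*(g x - 1)^2 :=
          mul_nonneg (mul_nonneg (by norm_num) (by linarith)) (sq_nonneg _)
        linarith
      have hh := hhnonneg x ⟨hx0, hx.2⟩
      exact mul_nonneg (mul_nonneg hβ hh) (Real.exp_pos _).le
  have hW1 := hWmono ⟨le_refl (y₀/2), by linarith⟩ ⟨by linarith, le_refl y₀⟩ (by linarith)
  have hWhalf : 0 < W (y₀/2) := by
    rw [hWdef]
    exact mul_pos (hFpos (y₀/2) (by linarith) (by linarith)) (Real.exp_pos _)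
  have hWy₀ : W y₀ ≤ 0 := by
    rw [hWdef]
    exact mul_nonpos_of_nonpos_of_nonneg hFy₀ (Real.exp_pos _).le
  linarith
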